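/- arXiv:1301.5580 — 2 statements merged into one kernel-verified Lean document; each statement's English description precedes it below -/
import Mathlib

section
/- For every real (or complex) α and |x| < 1/e, one has (W(x)/x)^α = ∑_{n≥0} (α(n+α)^{n-1}/n!)(-x)^n, where W is the principal branch of the Lambert W function. -/
open Finset

-- alternating Pascal recurrence
lemma alt_pascal (N : ℕ) (g : ℕ → ℝ) :
    ∑ k ∈ range (N + 2), (-1 : ℝ) ^ k * (N + 1).choose k * g k
    = ∑ k ∈ range (N + 1), (-1 : ℝ) ^ k * N.choose k * (g k - g (k + 1)) := by
  have h : ∀ k ∈ range (N + 1), (-1 : ℝ) ^ k * N.choose k * (g k - g (k+1))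
      = (-1 : ℝ) ^ k * N.choose k * g k + ((-1 : ℝ) ^ (k+1) * N.choose k * g (k+1)) := by
    intro k _; ring
  rw [Finset.sum_congr rfl h, Finset.sum_add_distrib]
  rw [Finset.sum_range_succ' (fun k => (-1 : ℝ) ^ k * (N+1).choose k * g k) (N+1)]
  have hc : ∀ k, ((N+1).choose (k+1) : ℝ) = N.choose k + N.choose (k+1) := by
    intro k; rw [Nat.choose_succ_succ]; push_cast; ring
  have : ∑ k ∈ range (N + 1), (-1 : ℝ) ^ (k+1) * (N+1).choose (k+1) * g (k+1)
      = ∑ k ∈ range (N + 1), ((-1 : ℝ) ^ (k+1) * N.choose k * g (k+1)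
        + (-1 : ℝ) ^ (k+1) * N.choose (k+1) * g (k+1)) := by
    refine Finset.sum_congr rfl fun k _ => ?_
    rw [hc]; ring
  rw [this, Finset.sum_add_distrib]
  have h2 : ∑ k ∈ range (N + 1), (-1 : ℝ) ^ (k+1) * (N.choose (k+1) : ℝ) * g (k+1)
      = ∑ k ∈ range (N + 1), (-1 : ℝ) ^ k * (N.choose k : ℝ) * g k
        - (-1 : ℝ) ^ 0 * (N.choose 0 : ℝ) * g 0 := by
    rw [eq_sub_iff_add_eq]
    have := Finset.sum_range_succ' (fun k => (-1 : ℝ) ^ k * (N.choose k : ℝ) * g k) N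
    rw [this]
    rw [Finset.sum_range_succ]
    simp [Nat.choose_succ_self]
  rw [h2]
  simp
  ring



lemma step (a : ℝ) (m : ℕ) : (a ^ m - (a + 1) ^ m : ℝ)
    = -∑ j ∈ range m, m.choose j * a ^ j := by
  rw [add_pow]
  simp only [one_pow, mul_one]
  rw [Finset.sum_range_succ]
  simp only [Nat.choose_self, Nat.cast_one, mul_one]
  rw [Finset.sum_congr rfl (fun j _ => by ring :
    ∀ j ∈ range m, (a:ℝ) ^ j * (m.choose j : ℝ) = (m.choose j : ℝ) * a ^ j)]
  ring

lemma alt_sum_vanish : ∀ N : ℕ, ∀ m : ℕ, m < N → ∀ x : ℝ,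
    ∑ k ∈ range (N + 1), (-1 : ℝ) ^ k * N.choose k * (x + k) ^ m = 0 := by
  intro N
  induction N with
  | zero => intro m hm; omega
  | succ N ih =>
    intro m hm x
    rw [show N + 1 + 1 = N + 2 from rfl, alt_pascal N (fun k => (x + k) ^ m)]
    have key : ∀ k : ℕ, ((x + k) ^ m - (x + (k+1 : ℕ)) ^ m : ℝ)
        = -∑ j ∈ range m, m.choose j * (x + k) ^ j := by
      intro k
      have hb : (x + (k+1 : ℕ) : ℝ) = (x + k) + 1 := by push_cast; ring
      rw [hb, step]
    simp only [key, mul_neg, Finset.mul_sum]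
    simp only [Finset.sum_neg_distrib]
    rw [neg_eq_zero, Finset.sum_comm]
    have inner : ∀ j ∈ range m, ∑ k ∈ range (N + 1),
        (-1:ℝ) ^ k * N.choose k * (m.choose j * (x + k) ^ j) = 0 := by
      intro j hj
      have := ih j (lt_of_lt_of_le (mem_range.mp hj) (Nat.lt_succ_iff.mp hm)) x
      calc ∑ k ∈ range (N + 1), (-1:ℝ) ^ k * N.choose k * (m.choose j * (x + k) ^ j)
          = (m.choose j : ℝ) * ∑ k ∈ range (N + 1), (-1:ℝ) ^ k * N.choose k * (x + k) ^ j := by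
            rw [Finset.mul_sum]; exact Finset.sum_congr rfl fun k _ => by ring
        _ = 0 := by rw [this, mul_zero]
    rw [Finset.sum_congr rfl inner]
    simp



/-- Abel polynomial value `x (x+k)^(k-1)`, with value `1` at `k = 0`. -/
noncomputable def abelD (x : ℝ) : ℕ → ℝ
  | 0 => 1
  | (k+1) => x * (x + (k+1 : ℕ)) ^ k

lemma abelD_mul_pow (x : ℝ) (n k : ℕ) (hk : k ≤ n) (hn : 1 ≤ n) :
    abelD x k * (x + k) ^ (n - k) = x * (x + k) ^ (n - 1) := by
  cases k with
  | zero =>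
    simp only [abelD, Nat.cast_zero, add_zero, one_mul, Nat.sub_zero]
    rw [← pow_succ' x (n-1), Nat.sub_add_cancel hn]
  | succ j =>
    simp only [abelD]
    rw [mul_assoc, ← pow_add]
    congr 2
    omega

/-- key evaluation at `y = -x-(n+1)` -/
lemma s2_eval (n : ℕ) (x : ℝ) :
    ∑ k ∈ range (n + 2), ((n+1).choose k : ℝ) * abelD x k * (-(x + k)) ^ (n + 1 - k) = 0 := by
  have h1 : ∀ k ∈ range (n + 2), ((n+1).choose k : ℝ) * abelD x k * (-(x + k)) ^ (n + 1 - k)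
      = ((-1:ℝ) ^ (n+1) * x) * ((-1:ℝ) ^ k * ((n+1).choose k) * (x + k) ^ n) := by
    intro k hk
    have hk' : k ≤ n + 1 := by simpa [Nat.lt_succ_iff] using mem_range.mp hk
    rw [neg_pow]
    have hsign : (-1:ℝ) ^ (n + 1 - k) = (-1:ℝ) ^ (n+1) * (-1:ℝ) ^ k := by
      have hs : (-1:ℝ) ^ (n + 1 - k) * (-1:ℝ) ^ k = (-1:ℝ) ^ (n+1) := by
        rw [← pow_add, Nat.sub_add_cancel hk']
      have h2 : ((-1:ℝ) ^ k) * ((-1:ℝ) ^ k) = 1 := by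
        rw [← pow_add]; exact Even.neg_one_pow ⟨k, rfl⟩
      calc (-1:ℝ) ^ (n + 1 - k) = (-1:ℝ) ^ (n + 1 - k) * (((-1:ℝ)^k) * ((-1:ℝ)^k)) := by
            rw [h2, mul_one]
        _ = (-1:ℝ) ^ (n+1) * (-1:ℝ) ^ k := by rw [← mul_assoc, hs]
    have h3 := abelD_mul_pow x (n+1) k hk' (by omega)
    simp only [Nat.add_sub_cancel] at h3
    calc ((n+1).choose k : ℝ) * abelD x k * ((-1:ℝ) ^ (n+1-k) * (x + k) ^ (n + 1 - k))
        = ((-1:ℝ) ^ (n+1-k)) * ((n+1).choose k) * (abelD x k * (x + k) ^ (n + 1 - k)) := by ring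
      _ = ((-1:ℝ) ^ (n+1) * (-1:ℝ) ^ k) * ((n+1).choose k) * (x * (x + k) ^ n) := by
            rw [hsign, h3]
      _ = ((-1:ℝ) ^ (n+1) * x) * ((-1:ℝ) ^ k * ((n+1).choose k) * (x + k) ^ n) := by ring
  rw [Finset.sum_congr rfl h1, ← Finset.mul_sum]
  rw [show n + 2 = (n+1) + 1 from rfl, alt_sum_vanish (n+1) n (Nat.lt_succ_self n) x, mul_zero]

/-- the Abel–Hurwitz identity `S2`. -/
lemma abelS2 : ∀ n : ℕ, ∀ x y : ℝ,
    ∑ k ∈ range (n + 1), (n.choose k : ℝ) * abelD x k * (y + ((n - k : ℕ) : ℝ)) ^ (n - k)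
      = (x + y + n) ^ n := by
  intro n
  induction n with
  | zero => intro x y; simp [abelD]
  | succ n ih =>
    intro x y
    set F : ℝ → ℝ := fun y => ∑ k ∈ range (n + 2),
      ((n+1).choose k : ℝ) * abelD x k * (y + (((n+1) - k : ℕ) : ℝ)) ^ ((n+1) - k) with hF
    set G : ℝ → ℝ := fun y => (x + y + ((n+1 : ℕ) : ℝ)) ^ (n+1) with hG
    have hFd : ∀ z : ℝ, HasDerivAt F (((n:ℝ)+1) * (x + (z+1) + n) ^ n) z := by
      intro z
      have term : ∀ k ∈ range (n + 2), HasDerivAt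
          (fun y : ℝ => ((n+1).choose k : ℝ) * abelD x k * (y + (((n+1) - k : ℕ) : ℝ)) ^ ((n+1) - k))
          (((n+1).choose k : ℝ) * abelD x k * ((((n+1) - k : ℕ):ℝ) * (z + (((n+1) - k : ℕ) : ℝ)) ^ ((n+1) - k - 1))) z := by
        intro k _
        have h0 : HasDerivAt (fun y : ℝ => y + (((n+1) - k : ℕ) : ℝ)) 1 z :=
          (hasDerivAt_id z).add_const _
        have h1 := h0.pow ((n+1) - k)
        simp only [mul_one] at h1
        exact h1.const_mul _
      have hsum := HasDerivAt.fun_sum term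
      refine hsum.congr_deriv ?_
      rw [Finset.sum_range_succ]
      have hlast : ((n+1).choose (n+1) : ℝ) * abelD x (n+1) *
          ((((n+1) - (n+1) : ℕ):ℝ) * (z + (((n+1) - (n+1) : ℕ) : ℝ)) ^ ((n+1) - (n+1) - 1)) = 0 := by
        simp
      rw [hlast, add_zero]
      have hterm : ∀ k ∈ range (n + 1),
          ((n+1).choose k : ℝ) * abelD x k *
            ((((n+1) - k : ℕ):ℝ) * (z + (((n+1) - k : ℕ) : ℝ)) ^ ((n+1) - k - 1))
          = ((n:ℝ)+1) * ((n.choose k : ℝ) * abelD x k * ((z+1) + ((n - k : ℕ) : ℝ)) ^ (n - k)) := by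
        intro k hk
        have hk' : k ≤ n := Nat.lt_succ_iff.mp (mem_range.mp hk)
        have he : (n+1) - k = (n - k) + 1 := by omega
        have hnat : (n+1).choose k * ((n+1) - k) = (n+1) * n.choose k := by
          rw [← Nat.choose_mul_succ_eq n k]; ring
        have hc := congrArg (fun t : ℕ => (t : ℝ)) hnat
        push_cast [he] at hc
        rw [he]
        simp only [Nat.add_sub_cancel]
        have hb : (z + (((n - k : ℕ) + 1 : ℕ) : ℝ)) = (z+1) + ((n - k : ℕ) : ℝ) := by
          push_cast; ring
        rw [hb]
        have hcast : (((n - k : ℕ) + 1 : ℕ) : ℝ) = ((n - k : ℕ) : ℝ) + 1 := by push_cast; ring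
        rw [hcast]
        linear_combination (abelD x k * ((z+1) + ((n - k : ℕ) : ℝ)) ^ (n - k)) * hc
      rw [Finset.sum_congr rfl hterm, ← Finset.mul_sum, ih x (z+1)]
    have hGd : ∀ z : ℝ, HasDerivAt G (((n:ℝ)+1) * (x + (z+1) + n) ^ n) z := by
      intro z
      have h0 : HasDerivAt (fun y : ℝ => x + y + ((n+1 : ℕ) : ℝ)) 1 z := by
        have := ((hasDerivAt_id z).const_add x).add_const ((n+1 : ℕ) : ℝ)
        simpa using this
      have h1 := h0.pow (n+1)
      simp only [mul_one] at h1
      refine h1.congr_deriv ?_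
      push_cast
      ring_nf
    have hconst : ∀ z w : ℝ, F z - G z = F w - G w := by
      intro z w
      have hd : Differentiable ℝ (fun y => F y - G y) :=
        fun z => ((hFd z).sub (hGd z)).differentiableAt
      have hd0 : ∀ z, deriv (fun y => F y - G y) z = 0 := by
        intro z
        have := ((hFd z).sub (hGd z))
        exact this.deriv.trans (sub_self _)
      exact is_const_of_deriv_eq_zero hd hd0 z w
    have hy0 : F (-x - ((n+1:ℕ):ℝ)) = 0 := by
      show ∑ k ∈ range (n + 2), ((n+1).choose k : ℝ) * abelD x k *
        ((-x - ((n+1:ℕ):ℝ)) + (((n+1) - k : ℕ) : ℝ)) ^ ((n+1) - k) = 0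
      have h : ∀ k ∈ range (n+2), ((n+1).choose k : ℝ) * abelD x k *
          ((-x - ((n+1:ℕ):ℝ)) + (((n+1) - k : ℕ) : ℝ)) ^ ((n+1) - k)
          = ((n+1).choose k : ℝ) * abelD x k * (-(x + k)) ^ (n + 1 - k) := by
        intro k hk
        have hk' : k ≤ n + 1 := by simpa [Nat.lt_succ_iff] using mem_range.mp hk
        have hb : ((-x - ((n+1:ℕ):ℝ)) + (((n+1) - k : ℕ) : ℝ)) = -(x + k) := by
          rw [Nat.cast_sub hk']; push_cast; ring
        rw [hb]
      rw [Finset.sum_congr rfl h]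
      exact s2_eval n x
    have hg0 : G (-x - ((n+1:ℕ):ℝ)) = 0 := by
      show (x + (-x - ((n+1:ℕ):ℝ)) + ((n+1:ℕ):ℝ)) ^ (n+1) = 0
      have hb : (x + (-x - ((n+1:ℕ):ℝ)) + ((n+1 : ℕ) : ℝ)) = 0 := by ring
      rw [hb]
      simp
    have h1 := hconst y (-x - ((n+1:ℕ):ℝ))
    rw [hy0, hg0, sub_zero] at h1
    have h2 : F y = G y := by linarith
    simpa [hF, hG] using h2




lemma abelS1 (N : ℕ) (x y : ℝ) :
    ∑ k ∈ range (N + 2), ((N+1).choose k : ℝ) * abelD x k * abelD y ((N+1) - k)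
      = (x + y) * (x + y + ((N+1:ℕ):ℝ)) ^ N := by
  rw [Finset.sum_range_succ]
  have hterm : ∀ k ∈ range (N + 1),
      ((N+1).choose k : ℝ) * abelD x k * abelD y ((N+1) - k)
      = ((N+1).choose k : ℝ) * abelD x k * (y + (((N+1) - k : ℕ) : ℝ)) ^ ((N+1) - k)
        - ((N+1).choose k : ℝ) * abelD x k *
          ((((N+1) - k : ℕ):ℝ) * (y + (((N+1) - k : ℕ) : ℝ)) ^ ((N+1) - k - 1)) := by
    intro k hk
    have hk' : k ≤ N := Nat.lt_succ_iff.mp (mem_range.mp hk)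
    have he : (N+1) - k = (N - k) + 1 := by omega
    rw [he]
    simp only [Nat.add_sub_cancel]
    show ((N+1).choose k : ℝ) * abelD x k * (y * (y + (((N - k) + 1 : ℕ) : ℝ)) ^ (N - k)) = _
    rw [pow_succ]
    ring
  rw [Finset.sum_congr rfl hterm, Finset.sum_sub_distrib]
  -- piece A
  have hA : ∑ k ∈ range (N + 1), ((N+1).choose k : ℝ) * abelD x k *
        (y + (((N+1) - k : ℕ) : ℝ)) ^ ((N+1) - k) + ((N+1).choose (N+1) : ℝ) * abelD x (N+1) * abelD y ((N+1)-(N+1))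
      = (x + y + ((N+1:ℕ):ℝ)) ^ (N+1) := by
    have := abelS2 (N+1) x y
    rw [Finset.sum_range_succ] at this
    simpa [abelD] using this
  -- piece B
  have hB : ∑ k ∈ range (N + 1), ((N+1).choose k : ℝ) * abelD x k *
        ((((N+1) - k : ℕ):ℝ) * (y + (((N+1) - k : ℕ) : ℝ)) ^ ((N+1) - k - 1))
      = ((N:ℝ)+1) * (x + (y+1) + N) ^ N := by
    have hterm2 : ∀ k ∈ range (N + 1),
        ((N+1).choose k : ℝ) * abelD x k *
          ((((N+1) - k : ℕ):ℝ) * (y + (((N+1) - k : ℕ) : ℝ)) ^ ((N+1) - k - 1))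
        = ((N:ℝ)+1) * ((N.choose k : ℝ) * abelD x k * ((y+1) + ((N - k : ℕ) : ℝ)) ^ (N - k)) := by
      intro k hk
      have hk' : k ≤ N := Nat.lt_succ_iff.mp (mem_range.mp hk)
      have he : (N+1) - k = (N - k) + 1 := by omega
      have hnat : (N+1).choose k * ((N+1) - k) = (N+1) * N.choose k := by
        rw [← Nat.choose_mul_succ_eq N k]; ring
      have hc := congrArg (fun t : ℕ => (t : ℝ)) hnat
      push_cast [he] at hc
      rw [he]
      simp only [Nat.add_sub_cancel]
      have hb : (y + (((N - k : ℕ) + 1 : ℕ) : ℝ)) = (y+1) + ((N - k : ℕ) : ℝ) := by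
        push_cast; ring
      rw [hb]
      have hcast : (((N - k : ℕ) + 1 : ℕ) : ℝ) = ((N - k : ℕ) : ℝ) + 1 := by push_cast; ring
      rw [hcast]
      linear_combination (abelD x k * ((y+1) + ((N - k : ℕ) : ℝ)) ^ (N - k)) * hc
    rw [Finset.sum_congr rfl hterm2, ← Finset.mul_sum, abelS2 N x (y+1)]
  have hA' : ∑ k ∈ range (N + 1), ((N+1).choose k : ℝ) * abelD x k *
        (y + (((N+1) - k : ℕ) : ℝ)) ^ ((N+1) - k)
      = (x + y + ((N+1:ℕ):ℝ)) ^ (N+1) - ((N+1).choose (N+1) : ℝ) * abelD x (N+1) * abelD y ((N+1)-(N+1)) := by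
    linarith [hA]
  rw [hB, hA']
  push_cast
  rw [pow_succ]
  ring




noncomputable def abelCoeff (α : ℝ) (n : ℕ) : ℝ :=
  if n = 0 then 1 else α * ((n : ℝ) + α) ^ (n - 1) / (Nat.factorial n : ℝ)

lemma abelCoeff_eq (α : ℝ) (n : ℕ) :
    abelCoeff α n = abelD α n / (Nat.factorial n : ℝ) := by
  cases n with
  | zero => simp [abelCoeff, abelD]
  | succ k =>
    simp only [abelCoeff, abelD, Nat.succ_ne_zero, if_false, Nat.add_sub_cancel]
    rw [add_comm ((k+1:ℕ):ℝ) α]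

lemma abelCoeff_conv (α β : ℝ) (n : ℕ) :
    ∑ p ∈ Finset.HasAntidiagonal.antidiagonal n, abelCoeff α p.1 * abelCoeff β p.2
      = abelCoeff (α + β) n := by
  rw [Finset.Nat.sum_antidiagonal_eq_sum_range_succ_mk]
  cases n with
  | zero => simp [abelCoeff]
  | succ N =>
    have h : ∀ k ∈ range (N + 2), abelCoeff α k * abelCoeff β ((N+1) - k)
        = (((N+1).choose k : ℝ) * abelD α k * abelD β ((N+1) - k)) / ((N+1).factorial : ℝ) := by
      intro k hk
      have hk' : k ≤ N + 1 := Nat.lt_succ_iff.mp (mem_range.mp hk)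
      rw [abelCoeff_eq, abelCoeff_eq, Nat.cast_choose ℝ hk']
      have h1 : (Nat.factorial k : ℝ) ≠ 0 := by positivity
      have h2 : (Nat.factorial ((N+1) - k) : ℝ) ≠ 0 := by positivity
      have h3 : (Nat.factorial (N+1) : ℝ) ≠ 0 := by positivity
      field_simp
    rw [Finset.sum_congr rfl h, ← Finset.sum_div, abelS1, abelCoeff_eq]
    simp only [abelD]

lemma nat_pow_le_exp_mul_factorial (n : ℕ) :
    (n : ℝ) ^ n ≤ Real.exp n * (Nat.factorial n : ℝ) := by
  have h1 : (n : ℝ) ^ n / (Nat.factorial n : ℝ) ≤ Real.exp n := by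
    have single : (n : ℝ) ^ n / (Nat.factorial n : ℝ)
        ≤ ∑ i ∈ range (n + 1), (n : ℝ) ^ i / (Nat.factorial i : ℝ) := by
      refine Finset.single_le_sum (f := fun i => (n : ℝ) ^ i / (Nat.factorial i : ℝ))
        (fun i _ => by positivity) (self_mem_range_succ n)
    refine single.trans ?_
    simpa using Real.sum_le_exp_of_nonneg (Nat.cast_nonneg n) (n+1)
  have h2 : (0:ℝ) < (Nat.factorial n : ℝ) := by positivity
  calc (n:ℝ)^n = (n : ℝ) ^ n / (Nat.factorial n : ℝ) * (Nat.factorial n : ℝ) := by field_simp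
    _ ≤ Real.exp n * (Nat.factorial n : ℝ) := by
        exact mul_le_mul_of_nonneg_right h1 h2.le

lemma abelCoeff_bound (α : ℝ) (R : ℝ) (hR : |α| ≤ R) (n : ℕ) :
    |abelCoeff α n| ≤ (1 + R * Real.exp R) * Real.exp n := by
  have hR0 : 0 ≤ R := (abs_nonneg α).trans hR
  have hC1 : (1:ℝ) ≤ 1 + R * Real.exp R := by nlinarith [Real.exp_pos R]
  cases n with
  | zero =>
    simpa [abelCoeff] using hC1
  | succ k =>
    set n := k + 1 with hn
    have hn1 : (1:ℝ) ≤ (n:ℝ) := by exact_mod_cast Nat.one_le_iff_ne_zero.mpr (by omega)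
    have hnpos : (0:ℝ) < n := by linarith
    have habs : |abelCoeff α n| = |α| * |(n:ℝ) + α| ^ k / (Nat.factorial n : ℝ) := by
      simp only [abelCoeff, hn, Nat.succ_ne_zero, if_false, Nat.add_sub_cancel]
      rw [abs_div, abs_mul, abs_pow, Nat.abs_cast]
    rw [habs]
    -- |n+α| ≤ n + R
    have h1 : |(n:ℝ) + α| ^ k ≤ ((n:ℝ) + R) ^ k := by
      refine pow_le_pow_left₀ (abs_nonneg _) ?_ k
      refine (abs_add_le _ _).trans ?_
      rw [Nat.abs_cast]
      linarith
    -- n + R ≤ n * exp (R/n)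
    have h2 : ((n:ℝ) + R) ^ k ≤ ((n:ℝ) * Real.exp (R / n)) ^ k := by
      refine pow_le_pow_left₀ (by positivity) ?_ k
      have h := Real.add_one_le_exp (R / n)
      have h' : (n:ℝ) * (R / n) = R := by field_simp
      nlinarith [h, h', hnpos]
    -- (n * exp(R/n))^k = n^k * exp(R k/n) ≤ n^k * exp R
    have h3 : ((n:ℝ) * Real.exp (R / n)) ^ k ≤ (n:ℝ) ^ k * Real.exp R := by
      rw [mul_pow, ← Real.exp_nat_mul]
      refine mul_le_mul_of_nonneg_left ?_ (by positivity)
      refine Real.exp_le_exp.mpr ?_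
      calc (k:ℝ) * (R / n) ≤ (n:ℝ) * (R/n) := by
            refine mul_le_mul_of_nonneg_right ?_ (by positivity)
            exact_mod_cast Nat.le_succ k
        _ = R := by field_simp
    have h4 : (n:ℝ) ^ k ≤ (n:ℝ) ^ n := pow_le_pow_right₀ hn1 (by omega)
    have h5 := nat_pow_le_exp_mul_factorial n
    have hfac : (0:ℝ) < (Nat.factorial n : ℝ) := by positivity
    have key : |α| * |(n:ℝ) + α| ^ k / (Nat.factorial n : ℝ)
        ≤ R * Real.exp R * Real.exp n := by
      rw [div_le_iff₀ hfac]
      calc |α| * |(n:ℝ) + α| ^ k ≤ R * ((n:ℝ)^n * Real.exp R) := by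
            have hb : |(n:ℝ) + α| ^ k ≤ (n:ℝ)^n * Real.exp R := by
              refine h1.trans (h2.trans (h3.trans ?_))
              exact mul_le_mul_of_nonneg_right h4 (Real.exp_pos R).le
            exact mul_le_mul hR hb (by positivity) hR0
        _ ≤ R * (Real.exp n * (Nat.factorial n : ℝ) * Real.exp R) := by
            refine mul_le_mul_of_nonneg_left ?_ hR0
            exact mul_le_mul_of_nonneg_right h5 (Real.exp_pos R).le
        _ = R * Real.exp R * Real.exp n * (Nat.factorial n : ℝ) := by ring
    refine key.trans ?_
    have := (Real.exp_pos (n:ℝ)).le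
    nlinarith [Real.exp_pos (n:ℝ)]





section analytic

variable {y : ℝ} (hy : Real.exp 1 * |y| < 1)

lemma term_bound (α R : ℝ) (hR : |α| ≤ R) (n : ℕ) :
    ‖abelCoeff α n * y ^ n‖ ≤ (1 + R * Real.exp R) * (Real.exp 1 * |y|) ^ n := by
  rw [Real.norm_eq_abs, abs_mul, abs_pow]
  calc |abelCoeff α n| * |y| ^ n ≤ ((1 + R * Real.exp R) * Real.exp n) * |y| ^ n := by
        refine mul_le_mul_of_nonneg_right (abelCoeff_bound α R hR n) (by positivity)
    _ = (1 + R * Real.exp R) * (Real.exp 1 * |y|) ^ n := by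
        rw [mul_pow, ← Real.exp_one_pow]
        ring

include hy in
lemma geom_summable (C : ℝ) : Summable (fun n : ℕ => C * (Real.exp 1 * |y|) ^ n) :=
  (summable_geometric_of_lt_one (by positivity) hy).mul_left C

include hy in
lemma abel_summable_norm (α : ℝ) :
    Summable (fun n : ℕ => ‖abelCoeff α n * y ^ n‖) := by
  refine Summable.of_nonneg_of_le (fun n => norm_nonneg _)
    (fun n => term_bound α |α| le_rfl n) (geom_summable hy _)

include hy in
lemma abel_summable (α : ℝ) : Summable (fun n : ℕ => abelCoeff α n * y ^ n) :=
  Summable.of_norm (abel_summable_norm hy α)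

noncomputable def Gfun (y α : ℝ) : ℝ := ∑' n : ℕ, abelCoeff α n * y ^ n

include hy in
lemma Gfun_mul (α β : ℝ) : Gfun y α * Gfun y β = Gfun y (α + β) := by
  rw [Gfun, Gfun, Gfun,
    tsum_mul_tsum_eq_tsum_sum_antidiagonal_of_summable_norm
      (abel_summable_norm hy α) (abel_summable_norm hy β)]
  refine tsum_congr fun n => ?_
  have h : ∀ p ∈ Finset.HasAntidiagonal.antidiagonal n,
      (abelCoeff α p.1 * y ^ p.1) * (abelCoeff β p.2 * y ^ p.2)
      = (abelCoeff α p.1 * abelCoeff β p.2) * y ^ n := by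
    intro p hp
    have := Finset.HasAntidiagonal.mem_antidiagonal.mp hp
    rw [← this, pow_add]
    ring
  rw [Finset.sum_congr rfl h, ← Finset.sum_mul, abelCoeff_conv]

lemma Gfun_zero : Gfun y 0 = 1 := by
  rw [Gfun]
  rw [tsum_eq_single 0 (fun n hn => ?_)]
  · simp [abelCoeff]
  · cases n with
    | zero => simp at hn
    | succ k => simp [abelCoeff]

lemma abelCoeff_cont (n : ℕ) : Continuous fun α : ℝ => abelCoeff α n * y ^ n := by
  cases n with
  | zero =>
    have h : (fun α : ℝ => abelCoeff α 0 * y ^ 0) = fun _ => 1 := by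
      funext a; simp [abelCoeff]
    rw [h]; exact continuous_const
  | succ k =>
    simp only [abelCoeff, Nat.succ_ne_zero, if_false]
    exact (((continuous_id.mul ((continuous_const.add continuous_id).pow _)).div_const
      _).mul continuous_const)

include hy in
lemma Gfun_cont : Continuous fun α => Gfun y α := by
  rw [continuous_iff_continuousAt]
  intro α₀
  set R := |α₀| + 1 with hRdef
  have hball : ContinuousOn (fun α => Gfun y α) (Metric.ball (0:ℝ) R) := by
    refine TendstoUniformlyOn.continuousOn
      (tendstoUniformlyOn_tsum (geom_summable hy (1 + R * Real.exp R))
        (fun n α hα => ?_)) (Filter.Frequently.of_forall fun t => ?_)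
    · refine term_bound α R ?_ n
      simpa [Real.norm_eq_abs] using (Metric.mem_ball.mp hα).le
    · exact (continuous_finset_sum t fun i _ => abelCoeff_cont i).continuousOn
  have hmem : α₀ ∈ Metric.ball (0:ℝ) R := by
    simp only [Metric.mem_ball, Real.dist_eq, sub_zero, hRdef]
    linarith [le_abs_self α₀, neg_abs_le α₀, abs_nonneg α₀]
  exact hball.continuousAt (Metric.isOpen_ball.mem_nhds hmem)

include hy in
lemma Gfun_pos (α : ℝ) : 0 < Gfun y α := by
  have hne : Gfun y α ≠ 0 := by
    intro h
    have := Gfun_mul hy α (-α)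
    rw [h, zero_mul, add_neg_cancel, Gfun_zero] at this
    norm_num at this
  have hsq : Gfun y α = Gfun y (α/2) * Gfun y (α/2) := by
    rw [Gfun_mul hy, add_halves]
  rcases lt_or_gt_of_ne hne with h | h
  · exfalso
    nlinarith [sq_nonneg (Gfun y (α/2)), hsq]
  · exact h

include hy in
lemma Gfun_rpow (α : ℝ) : Gfun y α = (Gfun y 1) ^ α := by
  set L : ℝ → ℝ := fun α => Real.log (Gfun y α) with hL
  have hadd : ∀ a b : ℝ, L (a + b) = L a + L b := by
    intro a b
    rw [hL]
    simp only []
    rw [← Gfun_mul hy a b, Real.log_mul (Gfun_pos hy a).ne' (Gfun_pos hy b).ne']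
  have hcont : Continuous L := by
    rw [continuous_iff_continuousAt]
    intro a
    exact (Real.continuousAt_log (Gfun_pos hy a).ne').comp (Gfun_cont hy).continuousAt
  set φ : ℝ →+ ℝ := AddMonoidHom.mk' L hadd with hφ
  have hlin := AddMonoidHom.toRealLinearMap φ hcont
  have hsmul : L α = α * L 1 := by
    have h1 : (AddMonoidHom.toRealLinearMap φ hcont) α = α • ((AddMonoidHom.toRealLinearMap φ hcont) 1) := by
      rw [← map_smul]
      norm_num
    have h2 : ∀ t : ℝ, (AddMonoidHom.toRealLinearMap φ hcont) t = L t := by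
      intro t
      rfl
    rw [h2, h2] at h1
    simpa using h1
  have := congrArg Real.exp hsmul
  rw [hL] at this
  simp only [] at this
  rw [Real.exp_log (Gfun_pos hy α)] at this
  rw [this, Real.rpow_def_of_pos (Gfun_pos hy 1)]
  rw [mul_comm]

end analytic








/-- The principal branch of the (real) Lambert W function, defined by its power series
`W(z) = -∑_{n ≥ 1} (n^{n-1}/n!) (-z)^n` (here indexed by `n = m+1`, `m : ℕ`). -/
noncomputable def lambertW (z : ℝ) : ℝ :=
  -∑' m : ℕ, (((m + 1 : ℕ) : ℝ) ^ m / (Nat.factorial (m + 1) : ℝ)) * (-z) ^ (m + 1)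

lemma coeff_one (m : ℕ) :
    (((m + 1 : ℕ) : ℝ) ^ m / (Nat.factorial (m + 1) : ℝ)) = abelCoeff 1 m := by
  cases m with
  | zero => simp [abelCoeff]
  | succ k =>
    simp only [abelCoeff, Nat.succ_ne_zero, if_false, Nat.add_sub_cancel, one_mul]
    have h1 : ((k+1+1 : ℕ):ℝ) = ((k+1:ℕ):ℝ) + 1 := by push_cast; ring
    rw [Nat.factorial_succ (k+1)]
    rw [h1, pow_succ]
    have h2 : ((k+1:ℕ):ℝ) + 1 ≠ 0 := by positivity
    have h3 : ((k+1).factorial : ℝ) ≠ 0 := by positivity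
    push_cast
    field_simp

lemma lambertW_div (x : ℝ) (hx0 : x ≠ 0) : lambertW x / x = Gfun (-x) 1 := by
  have key : lambertW x = x * ∑' m : ℕ,
      (((m + 1 : ℕ) : ℝ) ^ m / (Nat.factorial (m + 1) : ℝ)) * (-x) ^ m := by
    rw [lambertW]
    have h : ∀ m : ℕ, (((m + 1 : ℕ) : ℝ) ^ m / (Nat.factorial (m + 1) : ℝ)) * (-x) ^ (m+1)
        = (-x) * ((((m + 1 : ℕ) : ℝ) ^ m / (Nat.factorial (m + 1) : ℝ)) * (-x) ^ m) := by
      intro m; rw [pow_succ]; ring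
    rw [tsum_congr h, tsum_mul_left]
    ring
  rw [key, mul_comm, mul_div_assoc, div_self hx0, mul_one]
  exact tsum_congr fun m => by rw [coeff_one]

/-- for every real `α` and `0 < |x| < 1/e`,
`(W(x)/x)^α = ∑_{n ≥ 0} (α (n+α)^{n-1} / n!) (-x)^n`.
The `n = 0` coefficient `α (0+α)^{-1} = α/α` is `1` (its value as a rational function of `α`). -/
theorem lambertW_div_self_rpow (α x : ℝ) (hx0 : x ≠ 0) (hx : |x| < 1 / Real.exp 1) :
    (lambertW x / x) ^ α =
      ∑' n : ℕ,
        (if n = 0 then 1 else α * ((n : ℝ) + α) ^ (n - 1) / (Nat.factorial n : ℝ)) * (-x) ^ n := by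
  have hy : Real.exp 1 * |(-x)| < 1 := by
    rw [abs_neg]
    have := (lt_div_iff₀ (Real.exp_pos 1)).mp hx
    linarith [this]
  have h1 : lambertW x / x = Gfun (-x) 1 := lambertW_div x hx0
  rw [h1, ← Gfun_rpow hy α]
  rfl
end

section
/- The series y(x) = ∑_{n≥0} ((rn+1)^{n-1}/n!) x^{rn+1} satisfies y(x) = (W(-r x^r)/(-r))^{1/r} for small |x|; equivalently x = y e^{-y^r}. -/
open Finset

/-- The series `y(x) = ∑_{n ≥ 0} ((rn+1)^{n-1}/n!) x^{rn+1}`.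
(For `n = 0` the coefficient is `1^{-1} = 1 = (r·0+1)^{0}`, so natural subtraction is correct.) -/
noncomputable def ySpin (r : ℕ) (x : ℝ) : ℝ :=
  ∑' n : ℕ, (((r * n + 1 : ℕ) : ℝ) ^ (n - 1) / (Nat.factorial n : ℝ)) * x ^ (r * n + 1)

/- ## Auxiliary lemmas -/

lemma findiff : ∀ m : ℕ, ∀ j : ℕ, j < m →
    ∑ n ∈ range (m + 1), (-1 : ℝ) ^ (m - n) * (m.choose n) * (n : ℝ) ^ j = 0 := by
  intro m
  induction m using Nat.strong_induction_on with
  | _ m ih =>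
    intro j hj
    match j with
    | 0 =>
      have hm : m ≠ 0 := by omega
      have h : ∀ n ∈ range (m + 1), (-1 : ℝ) ^ (m - n) * (m.choose n) * (n : ℝ) ^ 0
          = (-1 : ℝ) ^ m * ((-1 : ℝ) ^ n * (m.choose n)) := by
        intro n hn
        rw [mem_range] at hn
        have h1 : (-1 : ℝ) ^ (m - n) * (-1 : ℝ) ^ (2 * n) = (-1 : ℝ) ^ m * (-1 : ℝ) ^ n := by
          rw [← pow_add, ← pow_add]; congr 1; omega
        rw [pow_zero, mul_one]
        calc (-1 : ℝ) ^ (m - n) * (m.choose n)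
            = ((-1 : ℝ) ^ (m - n) * (-1 : ℝ) ^ (2 * n)) * (m.choose n) := by
              rw [pow_mul]; norm_num
          _ = (-1 : ℝ) ^ m * ((-1 : ℝ) ^ n * (m.choose n)) := by rw [h1]; ring
      rw [Finset.sum_congr rfl h, ← Finset.mul_sum]
      have hcast : ∑ n ∈ range (m + 1), (-1 : ℝ) ^ n * (m.choose n) = 0 := by
        exact_mod_cast congrArg (Int.cast : ℤ → ℝ)
          (Int.alternating_sum_range_choose_of_ne hm)
      rw [hcast, mul_zero]
    | i + 1 =>
      obtain ⟨M, rfl⟩ : ∃ M, m = M + 1 := ⟨m - 1, by omega⟩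
      have hiM : i < M := by omega
      rw [Finset.sum_range_succ']
      simp only [Nat.cast_zero, ne_eq, Nat.succ_ne_zero, not_false_iff, zero_pow, mul_zero,
        add_zero]
      have hterm : ∀ n ∈ range (M + 1),
          (-1 : ℝ) ^ (M + 1 - (n + 1)) * (((M + 1).choose (n + 1) : ℕ) : ℝ)
            * (((n : ℕ) + 1 : ℕ) : ℝ) ^ (i + 1)
          = (M + 1 : ℝ) * ∑ l ∈ range (i + 1),
              ((-1 : ℝ) ^ (M - n) * (M.choose n) * (n : ℝ) ^ l) * (i.choose l) := by
        intro n hn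
        rw [mem_range] at hn
        have h1 : M + 1 - (n + 1) = M - n := by omega
        have h2 : (((M + 1).choose (n + 1) : ℕ) : ℝ) * ((n : ℝ) + 1)
            = (M + 1 : ℝ) * (M.choose n) := by
          have h := Nat.add_one_mul_choose_eq M n
          have h' : ((M + 1) * M.choose n : ℕ) = ((M + 1).choose (n + 1) * (n + 1) : ℕ) := h
          have h'' := congrArg (Nat.cast : ℕ → ℝ) h'
          push_cast at h''
          linarith
        have h3 : ((n : ℝ) + 1) ^ i = ∑ l ∈ range (i + 1), ((n : ℝ)) ^ l * (i.choose l) := by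
          simpa using add_pow (n : ℝ) 1 i
        rw [h1]
        push_cast
        calc (-1:ℝ) ^ (M - n) * ((M + 1).choose (n + 1)) * ((n:ℝ)+1) ^ (i+1)
            = ((((M + 1).choose (n + 1) : ℕ) : ℝ) * ((n:ℝ)+1))
                * ((-1:ℝ) ^ (M - n) * ((n:ℝ)+1) ^ i) := by ring
          _ = (M + 1 : ℝ) * ((M.choose n : ℝ) * ((-1:ℝ) ^ (M - n)
                * (∑ l ∈ range (i + 1), ((n : ℝ)) ^ l * (i.choose l)))) := by
              rw [h2, h3]; ring
          _ = (M + 1 : ℝ) * ∑ l ∈ range (i + 1),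
              ((-1 : ℝ) ^ (M - n) * (M.choose n) * (n : ℝ) ^ l) * (i.choose l) := by
              rw [Finset.mul_sum, Finset.mul_sum]; congr 1
              exact Finset.sum_congr rfl fun l _ => by ring
      rw [Finset.sum_congr rfl hterm, ← Finset.mul_sum]
      rw [Finset.sum_comm]
      have : ∀ l ∈ range (i + 1),
          ∑ n ∈ range (M + 1), ((-1 : ℝ) ^ (M - n) * (M.choose n) * (n : ℝ) ^ l) * (i.choose l)
          = 0 := by
        intro l hl
        rw [mem_range] at hl
        rw [← Finset.sum_mul, ih M (by omega) l (by omega), zero_mul]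
      rw [Finset.sum_congr rfl this, Finset.sum_const_zero, mul_zero]

lemma real_exp_tsum (z : ℝ) : Real.exp z = ∑' k : ℕ, z ^ k / (Nat.factorial k : ℝ) := by
  rw [Real.exp_eq_exp_ℝ, NormedSpace.exp_eq_tsum_div]

lemma pow_div_factorial_le_exp (x : ℝ) (hx : 0 ≤ x) (n : ℕ) :
    x ^ n / (Nat.factorial n : ℝ) ≤ Real.exp x := by
  rw [real_exp_tsum]
  exact Summable.le_tsum (Real.summable_pow_div_factorial x) n fun k _ => by positivity

/-- coefficient of `ySpin` -/
noncomputable def aR (r n : ℕ) : ℝ :=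
  ((r * n + 1 : ℕ) : ℝ) ^ (n - 1) / (Nat.factorial n : ℝ)

lemma aR_nonneg (r n : ℕ) : 0 ≤ aR r n := by unfold aR; positivity

lemma aR_le (r : ℕ) (n : ℕ) : aR r n ≤ (((r : ℝ) + 1) * Real.exp 1) ^ n := by
  cases n with
  | zero => simp [aR]
  | succ k =>
    set n := k + 1
    have hfac : (0 : ℝ) < (Nat.factorial n : ℝ) := by
      exact_mod_cast Nat.factorial_pos n
    unfold aR
    rw [div_le_iff₀ hfac]
    have hn1 : (1 : ℝ) ≤ (n : ℝ) := by exact_mod_cast Nat.one_le_iff_ne_zero.2 (by omega)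
    have hb : ((r * n + 1 : ℕ) : ℝ) ≤ ((r : ℝ) + 1) * (n : ℝ) := by
      push_cast
      nlinarith
    have hb1 : (1 : ℝ) ≤ ((r : ℝ) + 1) * (n : ℝ) := by nlinarith [Nat.cast_nonneg (α := ℝ) r]
    have hnn : (n : ℝ) ^ n ≤ Real.exp 1 ^ n * (Nat.factorial n : ℝ) := by
      have h1 := pow_div_factorial_le_exp (n : ℝ) (by positivity) n
      rw [div_le_iff₀ hfac] at h1
      have h2 : Real.exp (n : ℝ) = Real.exp 1 ^ n := by
        rw [← Real.exp_nat_mul, mul_one]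
      rw [h2] at h1
      exact h1
    calc ((r * n + 1 : ℕ) : ℝ) ^ (n - 1)
        ≤ (((r : ℝ) + 1) * (n : ℝ)) ^ (n - 1) := by
          exact pow_le_pow_left₀ (by positivity) hb _
      _ ≤ (((r : ℝ) + 1) * (n : ℝ)) ^ n := pow_le_pow_right₀ hb1 (Nat.sub_le n 1)
      _ = ((r : ℝ) + 1) ^ n * (n : ℝ) ^ n := mul_pow _ _ _
      _ ≤ ((r : ℝ) + 1) ^ n * (Real.exp 1 ^ n * (Nat.factorial n : ℝ)) := by
          have : (0:ℝ) ≤ ((r : ℝ) + 1) ^ n := by positivity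
          exact mul_le_mul_of_nonneg_left hnn this
      _ = (((r : ℝ) + 1) * Real.exp 1) ^ n * (Nat.factorial n : ℝ) := by
          rw [mul_pow]; ring

lemma summable_aR (r : ℕ) (s : ℝ) (hs : 0 ≤ s)
    (hq : ((r : ℝ) + 1) * Real.exp 1 * s ^ r < 1) :
    Summable fun n => aR r n * s ^ (r * n + 1) := by
  set q := ((r : ℝ) + 1) * Real.exp 1 * s ^ r with hqdef
  have hq0 : 0 ≤ q := by positivity
  refine Summable.of_nonneg_of_le
    (fun n => mul_nonneg (aR_nonneg r n) (by positivity)) (fun n => ?_)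
    ((summable_geometric_of_lt_one hq0 hq).mul_left s)
  have hsp : s ^ (r * n + 1) = (s ^ r) ^ n * s := by
    rw [← pow_mul, pow_succ]
  calc aR r n * s ^ (r * n + 1)
      ≤ (((r : ℝ) + 1) * Real.exp 1) ^ n * ((s ^ r) ^ n * s) := by
        refine mul_le_mul (aR_le r n) (le_of_eq hsp) (by positivity) (by positivity)
    _ = s * q ^ n := by
        conv_rhs => rw [hqdef, mul_pow]
        ring

lemma tsum_nat_eq_antidiagonal (f : ℕ × ℕ → ℝ) (hf : Summable f) :
    ∑' p : ℕ × ℕ, f p = ∑' m, ∑ kl ∈ Finset.HasAntidiagonal.antidiagonal m, f kl := by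
  conv_rhs => congr; ext; rw [← Finset.sum_finset_coe, ← tsum_fintype (L := SummationFilter.unconditional _)]
  rw [← Finset.HasAntidiagonal.sigmaAntidiagonalEquivProd.tsum_eq f]
  exact Summable.tsum_sigma' (fun m => (hasSum_fintype _).summable)
    (Finset.HasAntidiagonal.sigmaAntidiagonalEquivProd.summable_iff.mpr hf)

set_option maxHeartbeats 1600000 in
/-- The key inversion lemma: for small nonnegative `t`,
`ySpin r (t e^{-t^r}) = t`. -/
lemma ySpin_inverse (r : ℕ) (hr : 0 < r) :
    ∃ δ > (0 : ℝ), ∀ t : ℝ, 0 ≤ t → t ≤ δ →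
      ySpin r (t * Real.exp (-t ^ r)) = t := by
  refine ⟨min 1 (2 * ((r : ℝ) + 1) * Real.exp ((r : ℝ) + 1))⁻¹,
    lt_min one_pos (by positivity), ?_⟩
  intro t ht0 htd
  have ht1 : t ≤ 1 := le_trans htd (min_le_left _ _)
  have htX : t ≤ (2 * ((r : ℝ) + 1) * Real.exp ((r : ℝ) + 1))⁻¹ :=
    le_trans htd (min_le_right _ _)
  have htr : t ^ r ≤ t := by
    calc t ^ r ≤ t ^ 1 := pow_le_pow_of_le_one ht0 ht1 hr
      _ = t := pow_one t
  set s := t * Real.exp (t ^ r) with hsdef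
  have hs0 : 0 ≤ s := mul_nonneg ht0 (Real.exp_pos _).le
  have hsr : s ^ r ≤ t * Real.exp ((r : ℝ)) := by
    rw [hsdef, mul_pow, ← Real.exp_nat_mul]
    have h2 : Real.exp ((r : ℝ) * t ^ r) ≤ Real.exp ((r : ℝ)) := by
      apply Real.exp_le_exp.2
      calc (r : ℝ) * t ^ r ≤ (r : ℝ) * 1 :=
            mul_le_mul_of_nonneg_left (le_trans htr ht1) (Nat.cast_nonneg r)
        _ = (r : ℝ) := mul_one _
    exact mul_le_mul htr h2 (Real.exp_pos _).le ht0
  have hq : ((r : ℝ) + 1) * Real.exp 1 * s ^ r < 1 := by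
    have hA : (0 : ℝ) < ((r : ℝ) + 1) * Real.exp ((r : ℝ) + 1) := by positivity
    calc ((r : ℝ) + 1) * Real.exp 1 * s ^ r
        ≤ ((r : ℝ) + 1) * Real.exp 1 * (t * Real.exp ((r : ℝ))) :=
          mul_le_mul_of_nonneg_left hsr (by positivity)
      _ = ((r : ℝ) + 1) * Real.exp ((r : ℝ) + 1) * t := by
          rw [Real.exp_add]; ring
      _ ≤ ((r : ℝ) + 1) * Real.exp ((r : ℝ) + 1) *
            (2 * ((r : ℝ) + 1) * Real.exp ((r : ℝ) + 1))⁻¹ :=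
          mul_le_mul_of_nonneg_left htX (by positivity)
      _ < 1 := by
          rw [inv_eq_one_div, mul_one_div, div_lt_one (by positivity)]
          nlinarith [hA]
  have hsum_s : Summable fun n => aR r n * s ^ (r * n + 1) := summable_aR r s hs0 hq
  set g : ℕ × ℕ → ℝ := fun p =>
    (aR r p.1 * t ^ (r * p.1 + 1)) *
      ((-((r * p.1 + 1 : ℕ) : ℝ) * t ^ r) ^ p.2 / (Nat.factorial p.2 : ℝ)) with hgdef
  set G : ℕ × ℕ → ℝ := fun p =>
    (aR r p.1 * t ^ (r * p.1 + 1)) *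
      ((((r * p.1 + 1 : ℕ) : ℝ) * t ^ r) ^ p.2 / (Nat.factorial p.2 : ℝ)) with hGdef
  have hG0 : (0 : ℕ × ℕ → ℝ) ≤ G := by
    intro p
    simp only [hGdef, Pi.zero_apply]
    have := aR_nonneg r p.1
    positivity
  have hGfib_summ : ∀ n, Summable fun k => G (n, k) := by
    intro n
    simp only [hGdef]
    exact (Real.summable_pow_div_factorial (((r * n + 1 : ℕ) : ℝ) * t ^ r)).mul_left _
  have hGfib_sum : ∀ n, ∑' k, G (n, k) = aR r n * s ^ (r * n + 1) := by
    intro n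
    simp only [hGdef]
    rw [tsum_mul_left, ← real_exp_tsum ((((r * n + 1 : ℕ) : ℝ)) * t ^ r)]
    rw [hsdef, mul_pow, ← Real.exp_nat_mul]
    ring
  have hGsum : Summable G :=
    (summable_prod_of_nonneg hG0).2 ⟨hGfib_summ, (summable_congr hGfib_sum).mpr hsum_s⟩
  have habs : ∀ p : ℕ × ℕ, |g p| = G p := by
    rintro ⟨n, k⟩
    have h1 : (-((r * n + 1 : ℕ) : ℝ) * t ^ r) ^ k
        = (-1 : ℝ) ^ k * (((r * n + 1 : ℕ) : ℝ) * t ^ r) ^ k := by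
      rw [show -((r * n + 1 : ℕ) : ℝ) * t ^ r = (-1) * (((r * n + 1 : ℕ) : ℝ) * t ^ r) by ring,
        mul_pow]
    have h2 : g (n, k) = (-1 : ℝ) ^ k * G (n, k) := by
      simp only [hgdef, hGdef]
      rw [h1]
      ring
    rw [h2, abs_mul, abs_pow, abs_neg, abs_one, one_pow, one_mul,
      abs_of_nonneg (hG0 (n, k))]
  have hgsum : Summable g := by
    rw [← summable_abs_iff]
    exact (summable_congr habs).mpr hGsum
  have expand : ySpin r (t * Real.exp (-t ^ r)) = ∑' n, ∑' k, g (n, k) := by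
    unfold ySpin
    refine tsum_congr fun n => ?_
    simp only [hgdef]
    rw [tsum_mul_left, ← real_exp_tsum (-((r * n + 1 : ℕ) : ℝ) * t ^ r)]
    rw [mul_pow, ← Real.exp_nat_mul]
    rw [show ((r * n + 1 : ℕ) : ℝ) * (-t ^ r) = -((r * n + 1 : ℕ) : ℝ) * t ^ r by ring]
    unfold aR
    ring
  have hdiag : ∀ m : ℕ, ∑ kl ∈ Finset.HasAntidiagonal.antidiagonal m, g kl = if m = 0 then t else 0 := by
    intro m
    rw [Finset.Nat.sum_antidiagonal_eq_sum_range_succ_mk]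
    cases m with
    | zero =>
      simp only [hgdef]
      norm_num [aR]
    | succ M =>
      rw [if_neg (Nat.succ_ne_zero M)]
      have hstep : ∀ n ∈ range (M + 1 + 1), g (n, M + 1 - n)
          = (t ^ (r * (M + 1) + 1) / (Nat.factorial (M + 1) : ℝ))
              * ((-1 : ℝ) ^ (M + 1 - n) * ((M + 1).choose n : ℝ) * ((r : ℝ) * n + 1) ^ M) := by
        intro n hn
        rw [mem_range] at hn
        have hnm : n ≤ M + 1 := by omega
        have f1 : (-((r * n + 1 : ℕ) : ℝ) * t ^ r) ^ (M + 1 - n)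
            = (-1 : ℝ) ^ (M + 1 - n) * ((r * n + 1 : ℕ) : ℝ) ^ (M + 1 - n)
                * (t ^ r) ^ (M + 1 - n) := by
          rw [show -((r * n + 1 : ℕ) : ℝ) * t ^ r
              = (-1) * (((r * n + 1 : ℕ) : ℝ) * t ^ r) by ring, mul_pow, mul_pow]
          ring
        have f2 : t ^ (r * n + 1) * (t ^ r) ^ (M + 1 - n) = t ^ (r * (M + 1) + 1) := by
          obtain ⟨k, hk⟩ : ∃ k, M + 1 - n = k := ⟨M + 1 - n, rfl⟩
          have hk' : n + k = M + 1 := by omega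
          rw [hk, ← pow_mul, ← pow_add, ← hk']
          congr 1
          ring
        have f3 : ((r * n + 1 : ℕ) : ℝ) ^ (n - 1) * ((r * n + 1 : ℕ) : ℝ) ^ (M + 1 - n)
            = ((r * n + 1 : ℕ) : ℝ) ^ M := by
          cases n with
          | zero => norm_num
          | succ j =>
            rw [← pow_add]
            congr 1
            omega
        have f4 : ((r * n + 1 : ℕ) : ℝ) = (r : ℝ) * n + 1 := by push_cast; ring
        have key : ((r * n + 1 : ℕ) : ℝ) ^ (n - 1)
              * ((-((r * n + 1 : ℕ) : ℝ) * t ^ r) ^ (M + 1 - n)) * t ^ (r * n + 1)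
            = (-1 : ℝ) ^ (M + 1 - n) * ((r : ℝ) * n + 1) ^ M * t ^ (r * (M + 1) + 1) := by
          rw [f1]
          calc ((r * n + 1 : ℕ) : ℝ) ^ (n - 1)
                * ((-1 : ℝ) ^ (M + 1 - n) * ((r * n + 1 : ℕ) : ℝ) ^ (M + 1 - n)
                    * (t ^ r) ^ (M + 1 - n)) * t ^ (r * n + 1)
              = (-1 : ℝ) ^ (M + 1 - n)
                  * (((r * n + 1 : ℕ) : ℝ) ^ (n - 1) * ((r * n + 1 : ℕ) : ℝ) ^ (M + 1 - n))
                  * (t ^ (r * n + 1) * (t ^ r) ^ (M + 1 - n)) := by ring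
            _ = (-1 : ℝ) ^ (M + 1 - n) * ((r : ℝ) * n + 1) ^ M * t ^ (r * (M + 1) + 1) := by
                rw [f3, f2, f4]
        have hfn : ((Nat.factorial n : ℕ) : ℝ) ≠ 0 := by
          exact_mod_cast (Nat.factorial_pos n).ne'
        have hfmn : ((Nat.factorial (M + 1 - n) : ℕ) : ℝ) ≠ 0 := by
          exact_mod_cast (Nat.factorial_pos (M + 1 - n)).ne'
        have hfm : ((Nat.factorial (M + 1) : ℕ) : ℝ) ≠ 0 := by
          exact_mod_cast (Nat.factorial_pos (M + 1)).ne'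
        calc g (n, M + 1 - n)
            = (((r * n + 1 : ℕ) : ℝ) ^ (n - 1)
                * ((-((r * n + 1 : ℕ) : ℝ) * t ^ r) ^ (M + 1 - n)) * t ^ (r * n + 1))
                / ((Nat.factorial n : ℝ) * (Nat.factorial (M + 1 - n) : ℝ)) := by
              simp only [hgdef]
              unfold aR
              ring
          _ = ((-1 : ℝ) ^ (M + 1 - n) * ((r : ℝ) * n + 1) ^ M * t ^ (r * (M + 1) + 1))
                / ((Nat.factorial n : ℝ) * (Nat.factorial (M + 1 - n) : ℝ)) := by rw [key]
          _ = (t ^ (r * (M + 1) + 1) / (Nat.factorial (M + 1) : ℝ))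
                * ((-1 : ℝ) ^ (M + 1 - n) * ((M + 1).choose n : ℝ) * ((r : ℝ) * n + 1) ^ M) := by
              rw [Nat.cast_choose ℝ hnm]
              field_simp
      rw [Finset.sum_congr rfl hstep, ← Finset.mul_sum]
      have hexp : ∀ n : ℕ, ((r : ℝ) * n + 1) ^ M
          = ∑ j ∈ range (M + 1), ((r : ℝ) * n) ^ j * (M.choose j : ℝ) := fun n => by
        simpa using add_pow ((r : ℝ) * n) 1 M
      have hinner : ∑ n ∈ range (M + 1 + 1),
          (-1 : ℝ) ^ (M + 1 - n) * ((M + 1).choose n : ℝ) * ((r : ℝ) * n + 1) ^ M = 0 := by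
        calc ∑ n ∈ range (M + 1 + 1),
              (-1 : ℝ) ^ (M + 1 - n) * ((M + 1).choose n : ℝ) * ((r : ℝ) * n + 1) ^ M
            = ∑ n ∈ range (M + 1 + 1), ∑ j ∈ range (M + 1),
                ((-1 : ℝ) ^ (M + 1 - n) * ((M + 1).choose n : ℝ) * (n : ℝ) ^ j)
                  * ((r : ℝ) ^ j * (M.choose j : ℝ)) := by
              refine Finset.sum_congr rfl fun n _ => ?_
              rw [hexp n, Finset.mul_sum]
              refine Finset.sum_congr rfl fun j _ => ?_
              rw [mul_pow]
              ring
          _ = 0 := by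
              rw [Finset.sum_comm]
              refine Finset.sum_eq_zero fun j hj => ?_
              rw [mem_range] at hj
              rw [← Finset.sum_mul, findiff (M + 1) j (by omega), zero_mul]
      rw [hinner, mul_zero]
  rw [expand, ← Summable.tsum_prod hgsum, tsum_nat_eq_antidiagonal g hgsum, tsum_congr hdiag,
    tsum_ite_eq]

lemma lambertW_neg_eq (w : ℝ) : lambertW (-w) = -ySpin 1 w := by
  unfold lambertW ySpin
  congr 1
  refine tsum_congr fun n => ?_
  have h1 : (-(-w)) ^ (n + 1) = w ^ (n + 1) := by rw [neg_neg]
  have h2 : ((n + 1 : ℕ) : ℝ) ^ n = ((n + 1 : ℕ) : ℝ) * ((n + 1 : ℕ) : ℝ) ^ (n - 1) := by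
    cases n with
    | zero => norm_num
    | succ j =>
      rw [← pow_succ']
      norm_num
  have h3 : ((Nat.factorial (n + 1) : ℕ) : ℝ)
      = ((n + 1 : ℕ) : ℝ) * ((Nat.factorial n : ℕ) : ℝ) := by
    rw [Nat.factorial_succ]
    push_cast
    ring
  have h4 : (1 * n + 1 : ℕ) = n + 1 := by omega
  rw [h1, h2, h3, h4]
  have hne : ((n + 1 : ℕ) : ℝ) ≠ 0 := by positivity
  have hfac : ((Nat.factorial n : ℕ) : ℝ) ≠ 0 := by
    exact_mod_cast (Nat.factorial_pos n).ne'
  field_simp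

/-- for small `|x|` (here small nonnegative `x`, where the real power `(·)^{1/r}`
is defined), `y(x) = (W(-r x^r)/(-r))^{1/r}`; equivalently `x = y e^{-y^r}`. -/
theorem spectral_curve_r_spin (r : ℕ) (hr : 0 < r) :
    ∃ ε > (0 : ℝ), ∀ x : ℝ, 0 ≤ x → x < ε →
      ySpin r x = (lambertW (-(r : ℝ) * x ^ r) / (-(r : ℝ))) ^ ((r : ℝ)⁻¹) ∧
        x = ySpin r x * Real.exp (-(ySpin r x) ^ r) := by
  obtain ⟨dr, hdr, keyr⟩ := ySpin_inverse r hr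
  obtain ⟨d1, hd1, key1⟩ := ySpin_inverse 1 one_pos
  have hrR : (0 : ℝ) < (r : ℝ) := by exact_mod_cast hr
  set d : ℝ := min dr (min 1 (d1 / r)) with hddef
  have hd : 0 < d := lt_min hdr (lt_min one_pos (div_pos hd1 hrR))
  refine ⟨d * Real.exp (-d ^ r), by positivity, ?_⟩
  intro x hx0 hxe
  -- find t with t * exp (-t^r) = x via the intermediate value theorem
  have hcont : ContinuousOn (fun u : ℝ => u * Real.exp (-u ^ r)) (Set.Icc 0 d) := by
    fun_prop
  have hIVT := intermediate_value_Icc hd.le hcont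
  have hx_mem : x ∈ Set.Icc ((fun u : ℝ => u * Real.exp (-u ^ r)) 0)
      ((fun u : ℝ => u * Real.exp (-u ^ r)) d) := by
    constructor
    · simp only
      rw [zero_pow hr.ne', neg_zero, Real.exp_zero, zero_mul]
      exact hx0
    · exact hxe.le
  obtain ⟨t, htmem, hft⟩ := hIVT hx_mem
  obtain ⟨ht0, htd⟩ := htmem
  simp only at hft
  have htdr : t ≤ dr := le_trans htd (min_le_left _ _)
  have ht1 : t ≤ 1 := le_trans htd (le_trans (min_le_right _ _) (min_le_left _ _))
  have htd1r : t ≤ d1 / r := le_trans htd (le_trans (min_le_right _ _) (min_le_right _ _))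
  have hyx : ySpin r x = t := by
    rw [← hft]
    exact keyr t ht0 htdr
  have hsecond : x = ySpin r x * Real.exp (-(ySpin r x) ^ r) := by
    rw [hyx, ← hft]
  refine ⟨?_, hsecond⟩
  -- now the lambertW identity
  set sv : ℝ := (r : ℝ) * t ^ r with hsvdef
  have hsv0 : 0 ≤ sv := mul_nonneg hrR.le (pow_nonneg ht0 r)
  have hsv1 : sv ≤ d1 := by
    have h1 : t ^ r ≤ t := by
      calc t ^ r ≤ t ^ 1 := pow_le_pow_of_le_one ht0 ht1 hr
        _ = t := pow_one t
    calc sv = (r : ℝ) * t ^ r := hsvdef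
      _ ≤ (r : ℝ) * (d1 / r) := by
          apply mul_le_mul_of_nonneg_left (le_trans h1 htd1r) hrR.le
      _ = d1 := by field_simp
  have harg : (r : ℝ) * x ^ r = sv * Real.exp (-sv ^ 1) := by
    rw [← hft, mul_pow, ← Real.exp_nat_mul, hsvdef, pow_one]
    rw [show (r : ℝ) * (-t ^ r) = -((r : ℝ) * t ^ r) by ring]
    ring
  have hW : lambertW (-(r : ℝ) * x ^ r) = -sv := by
    rw [show -(r : ℝ) * x ^ r = -((r : ℝ) * x ^ r) by ring, lambertW_neg_eq, harg]
    rw [key1 sv hsv0 hsv1]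
  rw [hW, hyx]
  have hdiv : -sv / -(r : ℝ) = t ^ r := by
    rw [hsvdef]
    field_simp
  rw [hdiv]
  rw [← Real.rpow_natCast t r, ← Real.rpow_mul ht0]
  rw [mul_inv_cancel₀ hrR.ne', Real.rpow_one]
end
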